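/- Let h ∈ ℂ[z₁,…,zₙ] be a stable polynomial and write h = g + i·f where f, g ∈ ℝ[z₁,…,zₙ] (so f and g are the polynomials formed from the imaginary and real parts of the coefficients of h). Then each of f and g is either real stable or identically zero. Consequently, the set of stable polynomials in n variables equals {g + i·f : f, g ∈ H_n(ℝ) ∪ {0}, f ≪ g}. -/

import Mathlib

open MvPolynomial

def IsStable {σ : Type*} (f : MvPolynomial σ ℂ) : Prop :=
  ∀ z : σ → ℂ, (∀ i, 0 < (z i).im) → eval z f ≠ 0

def IsRealStable {σ : Type*} (f : MvPolynomial σ ℝ) : Prop :=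
  IsStable (f.map (algebraMap ℝ ℂ))

def ProperPosition {σ : Type*} (f g : MvPolynomial σ ℝ) : Prop :=
  IsStable (g.map (algebraMap ℝ ℂ) + C Complex.I * f.map (algebraMap ℝ ℂ))

section Helpers

lemma aeval_line_eval {n : ℕ} (w u : Fin n → ℂ) (q : MvPolynomial (Fin n) ℂ) (s : ℂ) :
    (MvPolynomial.aeval (fun j => Polynomial.C (w j) + Polynomial.C (u j) * Polynomial.X) q).eval s
      = MvPolynomial.eval (fun j => w j + u j * s) q := by
  induction q using MvPolynomial.induction_on with
  | C a => simp
  | add p q hp hq => simp [hp, hq]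
  | mul_X p j hp => simp [hp]

lemma aeval_line_eval_real {n : ℕ} (x v : Fin n → ℝ) (q : MvPolynomial (Fin n) ℝ) (s : ℂ) :
    ((MvPolynomial.aeval (fun j => Polynomial.C (x j) + Polynomial.C (v j) * Polynomial.X) q
        : Polynomial ℝ).map (algebraMap ℝ ℂ)).eval s
      = MvPolynomial.eval (fun j => (x j : ℂ) + (v j : ℂ) * s) (q.map (algebraMap ℝ ℂ)) := by
  induction q using MvPolynomial.induction_on with
  | C a => simp
  | add p q hp hq => simp [hp, hq]
  | mul_X p j hp => simp [hp, Polynomial.map_add, Polynomial.map_mul]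

lemma eval_conj_real {n : ℕ} (z : Fin n → ℂ) (q : MvPolynomial (Fin n) ℝ) :
    MvPolynomial.eval (fun j => (starRingEnd ℂ) (z j)) (q.map (algebraMap ℝ ℂ))
      = (starRingEnd ℂ) (MvPolynomial.eval z (q.map (algebraMap ℝ ℂ))) := by
  induction q using MvPolynomial.induction_on with
  | C a => simp
  | add p q hp hq => simp [hp, hq]
  | mul_X p j hp => simp [hp]

lemma abs_sub_conj_le {z r : ℂ} (hz : 0 < z.im) (hr : r.im ≤ 0) :
    ‖(starRingEnd ℂ) z - r‖ ≤ ‖z - r‖ := by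
  rw [Complex.norm_def, Complex.norm_def]
  apply Real.sqrt_le_sqrt
  simp only [Complex.normSq_apply, Complex.sub_re, Complex.sub_im, Complex.conj_re,
    Complex.conj_im]
  nlinarith

/-- For a univariate polynomial with no zeros in the open upper half plane, the modulus at a
point of the lower half plane obtained by conjugation is at most the modulus at the point. -/
lemma uni_modulus (p : Polynomial ℂ) (hp : ∀ s : ℂ, 0 < s.im → p.eval s ≠ 0) {z : ℂ}
    (hz : 0 < z.im) : ‖p.eval ((starRingEnd ℂ) z)‖ ≤ ‖p.eval z‖ := by
  have hp0 : p ≠ 0 := by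
    intro h
    exact hp Complex.I (by simp) (by simp [h])
  have hsplit : p.Splits := IsAlgClosed.splits p
  have heval : ∀ w : ℂ, p.eval w = p.leadingCoeff * ((p.roots.map fun a => w - a)).prod := by
    intro w
    conv_lhs => rw [Polynomial.Splits.eq_prod_roots hsplit]
    rw [Polynomial.eval_mul, Polynomial.eval_C, Polynomial.eval_multiset_prod, Multiset.map_map]
    simp
  have hroots : ∀ r ∈ p.roots, r.im ≤ 0 := by
    intro r hr
    by_contra h
    exact hp r (lt_of_not_ge h) ((Polynomial.isRoot_of_mem_roots hr))
  rw [heval, heval, norm_mul, norm_mul]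
  refine mul_le_mul_of_nonneg_left ?_ (norm_nonneg _)
  revert hroots
  refine Multiset.induction_on p.roots (by simp) ?_
  intro a s ih h
  simp only [Multiset.map_cons, Multiset.prod_cons, norm_mul]
  exact mul_le_mul (abs_sub_conj_le hz (h a (Multiset.mem_cons_self a s)))
    (ih fun r hr => h r (Multiset.mem_cons_of_mem hr)) (norm_nonneg _)
    (norm_nonneg _)

lemma im_mul_conj_eq (G F : ℂ) :
    (G * (starRingEnd ℂ) F).im
      = (Complex.normSq (G + Complex.I * F) - Complex.normSq (G - Complex.I * F)) / 4 := by
  simp only [Complex.normSq_apply, Complex.mul_im, Complex.add_re, Complex.add_im,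
    Complex.sub_re, Complex.sub_im, Complex.mul_re, Complex.I_re, Complex.I_im,
    Complex.conj_re, Complex.conj_im]
  ring

/-- The key positivity: if `g + i f` is stable then `Im (g(z) * conj (f(z))) ≥ 0` on the open
upper polydisc, via restriction to real lines and the univariate modulus inequality. -/
lemma key_ineq {n : ℕ} {f g : MvPolynomial (Fin n) ℝ}
    (hst : IsStable (g.map (algebraMap ℝ ℂ) + C Complex.I * f.map (algebraMap ℝ ℂ)))
    {z : Fin n → ℂ} (hz : ∀ i, 0 < (z i).im) :
    0 ≤ (eval z (g.map (algebraMap ℝ ℂ)) *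
      (starRingEnd ℂ) (eval z (f.map (algebraMap ℝ ℂ)))).im := by
  set x : Fin n → ℝ := fun j => (z j).re with hx
  set v : Fin n → ℝ := fun j => (z j).im with hv
  set φ : Fin n → Polynomial ℝ :=
    fun j => Polynomial.C (x j) + Polynomial.C (v j) * Polynomial.X with hφ
  set P : Polynomial ℂ := ((MvPolynomial.aeval φ g).map (algebraMap ℝ ℂ))
      + Polynomial.C Complex.I * ((MvPolynomial.aeval φ f).map (algebraMap ℝ ℂ)) with hP
  have hPeval : ∀ s : ℂ, P.eval s
      = MvPolynomial.eval (fun j => (x j : ℂ) + (v j : ℂ) * s) (g.map (algebraMap ℝ ℂ))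
        + Complex.I *
          MvPolynomial.eval (fun j => (x j : ℂ) + (v j : ℂ) * s) (f.map (algebraMap ℝ ℂ)) := by
    intro s
    rw [hP, Polynomial.eval_add, Polynomial.eval_mul, Polynomial.eval_C,
      aeval_line_eval_real, aeval_line_eval_real]
  have hPstab : ∀ s : ℂ, 0 < s.im → P.eval s ≠ 0 := by
    intro s hs
    rw [hPeval s]
    have := hst (fun j => (x j : ℂ) + (v j : ℂ) * s) (fun j => by
      simp only [Complex.add_im, Complex.ofReal_im, Complex.mul_im, Complex.ofReal_re,
        Complex.ofReal_im, zero_add, zero_mul, add_zero]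
      exact mul_pos (hz j) hs)
    simpa using this
  have hzI : (fun j => (x j : ℂ) + (v j : ℂ) * Complex.I) = z := by
    funext j
    simp [hx, hv, Complex.re_add_im]
  have hzmI : (fun j => (x j : ℂ) + (v j : ℂ) * (-Complex.I)) = fun j => (starRingEnd ℂ) (z j) := by
    funext j
    apply Complex.ext <;> simp [hx, hv]
  have hmod := uni_modulus P hPstab (z := Complex.I) (by simp)
  rw [Complex.conj_I] at hmod
  rw [hPeval, hPeval, hzI] at hmod
  rw [show (fun j => (x j : ℂ) + (v j : ℂ) * -Complex.I) = fun j => (starRingEnd ℂ) (z j) from hzmI]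
    at hmod
  set Gz := MvPolynomial.eval z (g.map (algebraMap ℝ ℂ)) with hGz
  set Fz := MvPolynomial.eval z (f.map (algebraMap ℝ ℂ)) with hFz
  rw [eval_conj_real, eval_conj_real, ← hGz, ← hFz] at hmod
  have hconj : (starRingEnd ℂ) Gz + Complex.I * (starRingEnd ℂ) Fz
      = (starRingEnd ℂ) (Gz - Complex.I * Fz) := by
    simp [map_sub, map_mul, Complex.conj_I]
  rw [hconj, Complex.norm_conj] at hmod
  rw [im_mul_conj_eq]
  have h1 : Complex.normSq (Gz - Complex.I * Fz) ≤ Complex.normSq (Gz + Complex.I * Fz) := by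
    rw [← Complex.sq_norm, ← Complex.sq_norm]
    exact pow_le_pow_left₀ (norm_nonneg _) hmod 2
  linarith

/-- Main lemma: the "imaginary part" of a stable polynomial is real stable or zero. -/
lemma f_stable_or_zero {n : ℕ} {f g : MvPolynomial (Fin n) ℝ}
    (hst : IsStable (g.map (algebraMap ℝ ℂ) + C Complex.I * f.map (algebraMap ℝ ℂ))) :
    IsRealStable f ∨ f = 0 := by
  by_cases hf : f = 0
  · exact Or.inr hf
  refine Or.inl ?_
  intro z hz
  by_contra h0'

  have hgz : MvPolynomial.eval z (g.map (algebraMap ℝ ℂ)) ≠ 0 := by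
    have := hst z hz
    simp only [map_add, map_mul, eval_C] at this
    rw [h0'] at this
    simpa using this
  have hfC : f.map (algebraMap ℝ ℂ) ≠ 0 := by
    intro h
    exact hf (MvPolynomial.map_injective _ (algebraMap ℝ ℂ).injective (by simpa using h))
  obtain ⟨ζ, hζ⟩ : ∃ ζ : Fin n → ℂ, MvPolynomial.eval ζ (f.map (algebraMap ℝ ℂ)) ≠ 0 := by
    by_contra h
    push_neg at h
    exact hfC (MvPolynomial.funext fun x => by simpa using h x)
  set w : Fin n → ℂ := fun j => ζ j - z j with hw
  set α : Polynomial ℂ := MvPolynomial.aeval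
    (fun j => Polynomial.C (z j) + Polynomial.C (w j) * Polynomial.X) (f.map (algebraMap ℝ ℂ))
    with hα
  set β : Polynomial ℂ := MvPolynomial.aeval
    (fun j => Polynomial.C (z j) + Polynomial.C (w j) * Polynomial.X) (g.map (algebraMap ℝ ℂ))
    with hβ
  have hαe : ∀ s : ℂ, α.eval s
      = MvPolynomial.eval (fun j => z j + w j * s) (f.map (algebraMap ℝ ℂ)) :=
    fun s => aeval_line_eval _ _ _ s
  have hβe : ∀ s : ℂ, β.eval s
      = MvPolynomial.eval (fun j => z j + w j * s) (g.map (algebraMap ℝ ℂ)) :=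
    fun s => aeval_line_eval _ _ _ s
  have hα0 : α.eval 0 = 0 := by
    rw [hαe]
    simpa using h0'
  have hβ0 : β.eval 0 ≠ 0 := by
    rw [hβe]
    simpa using hgz
  have hα1 : α.eval 1 ≠ 0 := by
    rw [hαe]
    have : (fun j => z j + w j * 1) = ζ := by funext j; simp [hw]
    rw [this]; exact hζ
  have hαne : α ≠ 0 := fun h => hα1 (by simp [h])
  set k : ℕ := α.rootMultiplicity 0 with hk
  obtain ⟨γ, hγeq, hγnd⟩ := α.exists_eq_pow_rootMultiplicity_mul_and_not_dvd hαne 0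
  rw [map_zero, sub_zero] at hγeq hγnd
  have hγ0 : γ.eval 0 ≠ 0 := by
    rw [← Polynomial.coeff_zero_eq_eval_zero]
    exact fun h => hγnd (Polynomial.X_dvd_iff.2 h)
  have hγeq' : α = Polynomial.X ^ k * γ := by rw [hk]; exact hγeq
  have hk0 : 0 < k := by
    rcases Nat.eq_zero_or_pos k with h | h
    · exfalso
      have h2 := hα0
      rw [hγeq', h, pow_zero, one_mul] at h2
      exact hγ0 h2
    · exact h
  set m : ℂ := β.eval 0 * (starRingEnd ℂ) (γ.eval 0) with hm
  have hmne : m ≠ 0 := mul_ne_zero hβ0 (star_ne_zero.2 hγ0)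
  set u : ℂ := -Complex.I * (‖m‖ : ℂ) / m with hu
  have hune : u ≠ 0 := by
    apply div_ne_zero _ hmne
    apply mul_ne_zero (neg_ne_zero.2 Complex.I_ne_zero)
    simpa using (norm_ne_zero_iff.mpr hmne)
  obtain ⟨d, hd⟩ := IsAlgClosed.exists_pow_nat_eq u hk0
  set c : ℂ := (starRingEnd ℂ) d with hc
  have hck : ((starRingEnd ℂ) c) ^ k = u := by
    rw [hc, Complex.conj_conj, hd]
  set Ψ : ℝ → ℝ := fun ε =>
    (u * (β.eval ((ε : ℂ) * c) * (starRingEnd ℂ) (γ.eval ((ε : ℂ) * c)))).im with hΨ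
  have hΨcont : Continuous Ψ := by
    apply Complex.continuous_im.comp
    apply Continuous.mul continuous_const
    apply Continuous.mul
    · exact β.continuous_aeval.comp ((Complex.continuous_ofReal).mul continuous_const)
    · exact Complex.continuous_conj.comp
        (γ.continuous_aeval.comp ((Complex.continuous_ofReal).mul continuous_const))
  have hΨ0 : Ψ 0 < 0 := by
    have hum : u * m = -Complex.I * (‖m‖ : ℂ) := by
      rw [hu, div_mul_cancel₀ _ hmne]
    have : Ψ 0 = (u * m).im := by
      simp [hΨ, hm]
    rw [this, hum]
    simp only [neg_mul, Complex.neg_im, Complex.mul_im, Complex.I_re, Complex.I_im,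
      Complex.ofReal_re, Complex.ofReal_im, zero_mul, one_mul, add_zero, mul_zero, zero_add]
    simpa using (norm_pos_iff.mpr hmne)
  have ev1 : ∀ᶠ ε in nhds (0 : ℝ), Ψ ε < 0 :=
    hΨcont.continuousAt.eventually_lt_const hΨ0
  have ev2 : ∀ᶠ ε : ℝ in nhds (0 : ℝ), ∀ j, 0 < (z j + w j * ((ε : ℂ) * c)).im := by
    rw [Filter.eventually_all]
    intro j
    have hcont : Continuous fun ε : ℝ => (z j + w j * ((ε : ℂ) * c)).im := by
      apply Complex.continuous_im.comp
      exact continuous_const.add (continuous_const.mul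
        ((Complex.continuous_ofReal).mul continuous_const))
    have h0' : Filter.Tendsto (fun ε : ℝ => (z j + w j * ((ε : ℂ) * c)).im)
        (nhds 0) (nhds ((z j).im)) := by
      simpa using hcont.tendsto 0
    exact h0'.eventually_const_lt (hz j)
  obtain ⟨ε, ⟨hΨε, hΛε⟩, hεpos⟩ :=
    ((((ev1.and ev2).filter_mono nhdsWithin_le_nhds).and
      (eventually_mem_nhdsWithin (s := Set.Ioi (0:ℝ)) (a := 0)))).exists
  have hεpos : 0 < ε := hεpos
  set s : ℂ := (ε : ℂ) * c with hs
  set z₁ : Fin n → ℂ := fun j => z j + w j * s with hz₁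
  have hkey := key_ineq hst (z := z₁) hΛε
  have heg : MvPolynomial.eval z₁ (g.map (algebraMap ℝ ℂ)) = β.eval s := (hβe s).symm
  have hef : MvPolynomial.eval z₁ (f.map (algebraMap ℝ ℂ)) = s ^ k * γ.eval s := by
    rw [← hαe s, hγeq']
    simp
  rw [heg, hef] at hkey
  have hconjs : (starRingEnd ℂ) (s ^ k * γ.eval s)
      = ((ε : ℝ) ^ k : ℝ) * (u * (starRingEnd ℂ) (γ.eval s)) := by
    rw [map_mul, map_pow]
    have : (starRingEnd ℂ) s = (ε : ℂ) * (starRingEnd ℂ) c := by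
      rw [hs, map_mul, Complex.conj_ofReal]
    rw [this, mul_pow, ← hck]
    push_cast
    ring
  rw [hconjs] at hkey
  have : (β.eval s * (((ε : ℝ) ^ k : ℝ) * (u * (starRingEnd ℂ) (γ.eval s)))).im
      = (ε : ℝ) ^ k * Ψ ε := by
    have hre : β.eval s * (((ε : ℝ) ^ k : ℝ) * (u * (starRingEnd ℂ) (γ.eval s)))
        = (((ε : ℝ) ^ k : ℝ) : ℂ) * (u * (β.eval s * (starRingEnd ℂ) (γ.eval s))) := by
      push_cast
      ring
    rw [hre, Complex.im_ofReal_mul]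
  rw [this] at hkey
  have : (ε : ℝ) ^ k * Ψ ε < 0 := mul_neg_of_pos_of_neg (pow_pos hεpos k) hΨε
  linarith

/-- The "real part" version, deduced by multiplying by `-i`. -/
lemma g_stable_or_zero {n : ℕ} {f g : MvPolynomial (Fin n) ℝ}
    (hst : IsStable (g.map (algebraMap ℝ ℂ) + C Complex.I * f.map (algebraMap ℝ ℂ))) :
    IsRealStable g ∨ g = 0 := by
  have hst' : IsStable (f.map (algebraMap ℝ ℂ) + C Complex.I * (-g).map (algebraMap ℝ ℂ)) := by
    intro z hz
    have h1 := hst z hz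
    simp only [map_add, map_mul, eval_C, map_neg] at h1 ⊢
    set a := MvPolynomial.eval z (g.map (algebraMap ℝ ℂ)) with ha
    set b := MvPolynomial.eval z (f.map (algebraMap ℝ ℂ)) with hb
    intro h0
    apply h1
    linear_combination Complex.I * h0 + a * Complex.I_sq
  rcases f_stable_or_zero (f := -g) (g := f) hst' with h | h
  · left
    intro z hz
    have := h z hz
    simp only [map_neg] at this
    simpa using this
  · right
    simpa using neg_eq_zero.mp h

noncomputable def rePart {σ : Type*} (h : MvPolynomial σ ℂ) : MvPolynomial σ ℝ :=
  AddMonoidAlgebra.ofCoeff (Finsupp.mapRange Complex.re Complex.zero_re (AddMonoidAlgebra.coeff h))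

noncomputable def imPart {σ : Type*} (h : MvPolynomial σ ℂ) : MvPolynomial σ ℝ :=
  AddMonoidAlgebra.ofCoeff (Finsupp.mapRange Complex.im Complex.zero_im (AddMonoidAlgebra.coeff h))

lemma coeff_rePart {σ : Type*} (h : MvPolynomial σ ℂ) (m : σ →₀ ℕ) :
    (rePart h).coeff m = (h.coeff m).re := rfl

lemma coeff_imPart {σ : Type*} (h : MvPolynomial σ ℂ) (m : σ →₀ ℕ) :
    (imPart h).coeff m = (h.coeff m).im := rfl

lemma re_im_decomp {σ : Type*} (h : MvPolynomial σ ℂ) :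
    h = (rePart h).map (algebraMap ℝ ℂ) + C Complex.I * (imPart h).map (algebraMap ℝ ℂ) := by
  apply MvPolynomial.ext
  intro m
  rw [coeff_add, coeff_C_mul, coeff_map, coeff_map, coeff_rePart, coeff_imPart]
  simp only [Complex.coe_algebraMap]
  rw [mul_comm]
  exact (Complex.re_add_im _).symm

end Helpers

theorem stmt1 {n : ℕ} :
    (∀ f g : MvPolynomial (Fin n) ℝ,
      IsStable (g.map (algebraMap ℝ ℂ) + C Complex.I * f.map (algebraMap ℝ ℂ)) →
      (IsRealStable f ∨ f = 0) ∧ (IsRealStable g ∨ g = 0)) ∧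
    {h : MvPolynomial (Fin n) ℂ | IsStable h} =
      {h : MvPolynomial (Fin n) ℂ | ∃ f g : MvPolynomial (Fin n) ℝ,
        (IsRealStable f ∨ f = 0) ∧ (IsRealStable g ∨ g = 0) ∧ ProperPosition f g ∧
        h = g.map (algebraMap ℝ ℂ) + C Complex.I * f.map (algebraMap ℝ ℂ)} := by
  constructor
  · intro f g hst
    exact ⟨f_stable_or_zero hst, g_stable_or_zero hst⟩
  · ext h
    simp only [Set.mem_setOf_eq]
    constructor
    · intro hh
      refine ⟨imPart h, rePart h, ?_, ?_, ?_, ?_⟩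
      · exact f_stable_or_zero (g := rePart h) (by rw [← re_im_decomp h]; exact hh)
      · exact g_stable_or_zero (f := imPart h) (by rw [← re_im_decomp h]; exact hh)
      · show IsStable _
        rw [← re_im_decomp h]
        exact hh
      · exact re_im_decomp h
    · rintro ⟨f, g, _, _, hpp, rfl⟩
      exact hpp
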